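/- Let H be a complex Hilbert space and T a bounded linear operator on H that is m-symmetric, i.e., \sum_{j=0}^m (-1)^j \binom{m}{j} (T^*)^{m-j} T^j = 0. Then every approximate point spectrum value of T is real: if \lambda \in \mathbb{C} and there exist unit vectors x_n with (T - \lambda)x_n \to 0, then \lambda \in \mathbb{R}. -/

import Mathlib

open Filter Topology ComplexConjugate ContinuousLinearMap

local notation "⟪" x ", " y "⟫" => @inner ℂ _ _ x y

private lemma aux_powA {H : Type*} [NormedAddCommGroup H] [InnerProductSpace ℂ H]
    (T : H →L[ℂ] H) (lam : ℂ) (x : ℕ → H)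
    (hlim : Tendsto (fun n => ‖(T - lam • 1) (x n)‖) atTop (nhds 0)) (j : ℕ) :
    Tendsto (fun n => ‖(T ^ j - lam ^ j • 1) (x n)‖) atTop (nhds 0) := by
  induction j with
  | zero => simp
  | succ j ih =>
    have key : ∀ n, (T ^ (j+1) - lam ^ (j+1) • 1) (x n)
        = T ((T ^ j - lam ^ j • 1) (x n)) + lam ^ j • ((T - lam • 1) (x n)) := by
      intro n
      simp only [ContinuousLinearMap.sub_apply, ContinuousLinearMap.smul_apply,
        ContinuousLinearMap.one_apply, pow_succ', ContinuousLinearMap.mul_apply, map_sub,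
        map_smul, smul_sub, smul_smul, pow_succ]
      rw [mul_comm]
      abel
    have hb : ∀ n, ‖(T ^ (j+1) - lam ^ (j+1) • 1) (x n)‖
        ≤ ‖T‖ * ‖(T ^ j - lam ^ j • 1) (x n)‖ + ‖lam‖ ^ j * ‖(T - lam • 1) (x n)‖ := by
      intro n
      rw [key n]
      refine (norm_add_le _ _).trans ?_
      gcongr
      · exact T.le_opNorm _
      · rw [norm_smul, norm_pow]
    have h2 : Tendsto (fun n => ‖T‖ * ‖(T ^ j - lam ^ j • 1) (x n)‖
        + ‖lam‖ ^ j * ‖(T - lam • 1) (x n)‖) atTop (nhds 0) := by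
      have := (ih.const_mul ‖T‖).add (hlim.const_mul (‖lam‖ ^ j))
      simpa using this
    exact squeeze_zero (fun n => norm_nonneg _) hb h2

private lemma aux_innerB {H : Type*} [NormedAddCommGroup H] [InnerProductSpace ℂ H]
    (lam : ℂ) (x : ℕ → H) (hx : ∀ n, ‖x n‖ = 1)
    (a b : ℕ → H) (j k : ℕ)
    (ha : Tendsto (fun n => ‖a n‖) atTop (nhds 0))
    (hb : Tendsto (fun n => ‖b n‖) atTop (nhds 0)) :
    Tendsto (fun n => ⟪a n + lam ^ j • x n, b n + lam ^ k • x n⟫) atTop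
      (nhds (conj (lam ^ j) * lam ^ k)) := by
  have expand : ∀ n, ⟪a n + lam ^ j • x n, b n + lam ^ k • x n⟫
      = ⟪a n, b n⟫ + lam ^ k * ⟪a n, x n⟫ + conj (lam ^ j) * ⟪x n, b n⟫
        + conj (lam ^ j) * lam ^ k * ⟪x n, x n⟫ := by
    intro n
    simp only [inner_add_left, inner_add_right, inner_smul_left, inner_smul_right]
    ring
  have hxx : ∀ n, (⟪x n, x n⟫ : ℂ) = 1 := by
    intro n
    rw [inner_self_eq_norm_sq_to_K, hx n]
    norm_num
  have habn : Tendsto (fun n => (⟪a n, b n⟫ : ℂ)) atTop (nhds 0) := by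
    rw [tendsto_zero_iff_norm_tendsto_zero]
    refine squeeze_zero (fun n => norm_nonneg _) (fun n => norm_inner_le_norm _ _) ?_
    simpa using ha.mul hb
  have haxn : Tendsto (fun n => (⟪a n, x n⟫ : ℂ)) atTop (nhds 0) := by
    rw [tendsto_zero_iff_norm_tendsto_zero]
    refine squeeze_zero (g := fun n => ‖a n‖) (fun n => norm_nonneg _) (fun n => ?_) ha
    calc ‖(⟪a n, x n⟫ : ℂ)‖ ≤ ‖a n‖ * ‖x n‖ := norm_inner_le_norm _ _
      _ = ‖a n‖ := by rw [hx n, mul_one]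
  have hxbn : Tendsto (fun n => (⟪x n, b n⟫ : ℂ)) atTop (nhds 0) := by
    rw [tendsto_zero_iff_norm_tendsto_zero]
    refine squeeze_zero (g := fun n => ‖b n‖) (fun n => norm_nonneg _) (fun n => ?_) hb
    calc ‖(⟪x n, b n⟫ : ℂ)‖ ≤ ‖x n‖ * ‖b n‖ := norm_inner_le_norm _ _
      _ = ‖b n‖ := by rw [hx n, one_mul]
  simp only [expand, hxx, mul_one]
  have := ((habn.add (haxn.const_mul (lam ^ k))).add
    (hxbn.const_mul (conj (lam ^ j)))).add (tendsto_const_nhds (x := conj (lam ^ j) * lam ^ k))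
  simpa using this

theorem stmt_16 {H : Type*} [NormedAddCommGroup H] [InnerProductSpace ℂ H]
    [CompleteSpace H] (T : H →L[ℂ] H) (m : ℕ) (hm : 0 < m)
    (hsym : ∑ j ∈ Finset.range (m + 1),
        (-1 : H →L[ℂ] H) ^ j * (m.choose j : H →L[ℂ] H) *
          ((ContinuousLinearMap.adjoint T) ^ (m - j) * T ^ j) = 0)
    (lam : ℂ) (x : ℕ → H) (hx : ∀ n, ‖x n‖ = 1)
    (hlim : Filter.Tendsto (fun n => ‖(T - lam • 1) (x n)‖) Filter.atTop (nhds 0)) :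
    lam.im = 0 := by
  -- rewrite coefficients as scalars
  have hcoef : ∀ j : ℕ, (-1 : H →L[ℂ] H) ^ j * (m.choose j : H →L[ℂ] H)
      * ((ContinuousLinearMap.adjoint T) ^ (m - j) * T ^ j)
      = ((-1 : ℂ) ^ j * (m.choose j : ℂ)) •
        ((ContinuousLinearMap.adjoint T) ^ (m - j) * T ^ j) := by
    intro j
    have h1 : (-1 : H →L[ℂ] H) ^ j = ((-1 : ℂ) ^ j) • 1 := by
      rw [show (-1 : H →L[ℂ] H) = (-1 : ℂ) • 1 by ext v; simp, smul_pow, one_pow]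
    have h2 : (m.choose j : H →L[ℂ] H) = ((m.choose j : ℂ)) • 1 := by
      ext v; simp [Nat.cast_smul_eq_nsmul]
    rw [h1, h2, smul_mul_smul_comm, one_mul, smul_mul_assoc, one_mul]
  -- the scalar identity for each n
  have h0 : ∀ n, ∑ j ∈ Finset.range (m + 1),
      ((-1 : ℂ) ^ j * (m.choose j : ℂ)) * ⟪(T ^ (m - j)) (x n), (T ^ j) (x n)⟫ = 0 := by
    intro n
    have happ := congrArg (fun S : H →L[ℂ] H => (⟪x n, S (x n)⟫ : ℂ)) hsym
    simp only [ContinuousLinearMap.zero_apply, inner_zero_right] at happ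
    rw [← happ]
    rw [ContinuousLinearMap.sum_apply, inner_sum]
    refine Finset.sum_congr rfl (fun j _ => ?_)
    rw [hcoef j]
    rw [ContinuousLinearMap.smul_apply, inner_smul_right]
    congr 1
    have hadj : (ContinuousLinearMap.adjoint T) ^ (m - j)
        = ContinuousLinearMap.adjoint (T ^ (m - j)) := by
      rw [← ContinuousLinearMap.star_eq_adjoint, ← ContinuousLinearMap.star_eq_adjoint,
        star_pow]
    rw [ContinuousLinearMap.mul_apply, hadj, ContinuousLinearMap.adjoint_inner_right]
  -- the limit of the scalar sequence
  have hTlim : Tendsto (fun n => ∑ j ∈ Finset.range (m + 1),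
      ((-1 : ℂ) ^ j * (m.choose j : ℂ)) * ⟪(T ^ (m - j)) (x n), (T ^ j) (x n)⟫)
      atTop (nhds (∑ j ∈ Finset.range (m + 1),
        ((-1 : ℂ) ^ j * (m.choose j : ℂ)) * (conj (lam ^ (m - j)) * lam ^ j))) := by
    refine tendsto_finset_sum _ (fun j _ => ?_)
    refine Tendsto.const_mul _ ?_
    have key := aux_innerB lam x hx
      (fun n => (T ^ (m - j) - lam ^ (m - j) • 1) (x n))
      (fun n => (T ^ j - lam ^ j • 1) (x n)) (m - j) j
      (aux_powA T lam x hlim (m - j)) (aux_powA T lam x hlim j)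
    have heq : ∀ n, (T ^ (m - j) - lam ^ (m - j) • 1) (x n) + lam ^ (m - j) • x n
        = (T ^ (m - j)) (x n) := by
      intro n; simp [ContinuousLinearMap.sub_apply]
    have heq2 : ∀ n, (T ^ j - lam ^ j • 1) (x n) + lam ^ j • x n = (T ^ j) (x n) := by
      intro n; simp [ContinuousLinearMap.sub_apply]
    simpa only [heq, heq2] using key
  have hzero : (∑ j ∈ Finset.range (m + 1),
      ((-1 : ℂ) ^ j * (m.choose j : ℂ)) * (conj (lam ^ (m - j)) * lam ^ j)) = 0 := by
    have : Tendsto (fun _ : ℕ => (0 : ℂ)) atTop (nhds (∑ j ∈ Finset.range (m + 1),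
        ((-1 : ℂ) ^ j * (m.choose j : ℂ)) * (conj (lam ^ (m - j)) * lam ^ j))) := by
      simpa only [h0] using hTlim
    exact (tendsto_nhds_unique tendsto_const_nhds this).symm
  -- identify the sum with (conj lam - lam)^m
  have hbin : (conj lam - lam) ^ m = ∑ j ∈ Finset.range (m + 1),
      ((-1 : ℂ) ^ j * (m.choose j : ℂ)) * (conj (lam ^ (m - j)) * lam ^ j) := by
    rw [show conj lam - lam = -lam + conj lam by ring, add_pow]
    refine Finset.sum_congr rfl (fun j _ => ?_)
    rw [map_pow, neg_pow]
    ring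
  rw [hzero] at hbin
  have : conj lam - lam = 0 := by
    exact pow_eq_zero_iff hm.ne'  |>.mp hbin
  have hconj : conj lam = lam := by linear_combination this
  exact Complex.conj_eq_iff_im.mp hconj
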